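/- Let K, L be star bodies in ℝⁿ, 0 ≤ i < n, and p ≥ 1. Define W̃_{-p,i}(K,L) = (1/n)∫_{S^{n-1}} ρ(K,u)^{n-i+p} ρ(L,u)^{-p} dS(u) and W̃ᵢ(K) = (1/n)∫_{S^{n-1}} ρ(K,u)^{n-i} dS(u). Then W̃_{-p,i}(K,L)^{n-i} ≥ W̃ᵢ(K)^{n-i+p} W̃ᵢ(L)^{-p}, with equality if and only if K and L are dilates. -/

import Mathlib

open MeasureTheory Metric Real Set
open scoped NNReal ENNReal

/-- The surface (spherical) measure on the unit sphere `S^{n-1} ⊆ ℝⁿ`. -/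
noncomputable def sphereσ (n : ℕ) : Measure (sphere (0 : EuclideanSpace ℝ (Fin n)) 1) :=
  μH[(n : ℝ) - 1]

-- strict AM-GM
lemma amgm_lt {x y t : ℝ} (hx : 0 < x) (hy : 0 < y) (hxy : x ≠ y) (ht0 : 0 < t) (ht1 : t < 1) :
    x ^ (1 - t) * y ^ t < (1 - t) * x + t * y := by
  have h1t : 0 < 1 - t := by linarith
  have hlog := strictConcaveOn_log_Ioi.2 (mem_Ioi.2 hx) (mem_Ioi.2 hy) hxy h1t ht0 (by ring)
  simp only [smul_eq_mul] at hlog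
  have hpos : 0 < (1 - t) * x + t * y := by positivity
  calc x ^ (1 - t) * y ^ t = exp ((1 - t) * log x + t * log y) := by
        rw [exp_add, Real.rpow_def_of_pos hx, Real.rpow_def_of_pos hy,
          mul_comm (log x), mul_comm (log y)]
    _ < exp (log ((1 - t) * x + t * y)) := exp_lt_exp.2 hlog
    _ = (1 - t) * x + t * y := exp_log hpos

lemma amgm_le {x y t : ℝ} (hx : 0 ≤ x) (hy : 0 ≤ y) (ht0 : 0 ≤ t) (ht1 : t ≤ 1) :
    x ^ (1 - t) * y ^ t ≤ (1 - t) * x + t * y :=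
  Real.geom_mean_le_arith_mean2_weighted (by linarith) ht0 hx hy (by ring)

set_option linter.unusedSectionVars false
section Core
variable {α : Type*} [MetricSpace α] [CompactSpace α] [SecondCountableTopology α]
  [MeasurableSpace α] [BorelSpace α]
  (μ : Measure α) [IsFiniteMeasure μ] [μ.IsOpenPosMeasure] [Nonempty α]

lemma cont_integrable {f : α → ℝ} (hf : Continuous f) : Integrable f μ :=
  hf.integrable_of_hasCompactSupport (IsClosed.isCompact (isClosed_tsupport f))

lemma integral_pos_of_pos {f : α → ℝ} (hf : Continuous f) (hpos : ∀ u, 0 < f u) :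
    0 < ∫ u, f u ∂μ := by
  refine (integral_pos_iff_support_of_nonneg (fun u => (hpos u).le) (cont_integrable μ hf)).2 ?_
  have hs : Function.support f = univ := Set.eq_univ_iff_forall.2 fun u => (hpos u).ne'
  rw [hs]
  exact isOpen_univ.measure_pos μ univ_nonempty

lemma integral_eq_zero_iff_of_nonneg {f : α → ℝ} (hf : Continuous f) (hpos : ∀ u, 0 ≤ f u) :
    ∫ u, f u ∂μ = 0 ↔ ∀ u, f u = 0 := by
  constructor
  · intro h u
    by_contra hu
    have h1 : 0 < ∫ u, f u ∂μ := by
      refine (integral_pos_iff_support_of_nonneg hpos (cont_integrable μ hf)).2 ?_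
      have ho : IsOpen (Function.support f) := by
        have : Function.support f = f ⁻¹' ({0}ᶜ) := rfl
        rw [this]
        exact (isOpen_compl_iff.2 isClosed_singleton).preimage hf
      exact ho.measure_pos μ ⟨u, hu⟩
    exact h1.ne' h
  · intro h
    simp [funext h]

lemma holder_core (F G : α → ℝ) (hFc : Continuous F) (hGc : Continuous G)
    (hF : ∀ u, 0 < F u) (hG : ∀ u, 0 < G u) (t : ℝ) (ht0 : 0 < t) (ht1 : t < 1) :
    ∫ u, F u ^ (1 - t) * G u ^ t ∂μ ≤ (∫ u, F u ∂μ) ^ (1 - t) * (∫ u, G u ∂μ) ^ t ∧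
      ((∫ u, F u ^ (1 - t) * G u ^ t ∂μ = (∫ u, F u ∂μ) ^ (1 - t) * (∫ u, G u ∂μ) ^ t) ↔
        ∃ c : ℝ, 0 < c ∧ ∀ u, F u = c * G u) := by
  have h1t : (0:ℝ) < 1 - t := by linarith
  set IF := ∫ u, F u ∂μ with hIFdef
  set IG := ∫ u, G u ∂μ with hIGdef
  have hIF : 0 < IF := integral_pos_of_pos μ hFc hF
  have hIG : 0 < IG := integral_pos_of_pos μ hGc hG
  set c : ℝ := IF ^ (1 - t) * IG ^ t with hcdef
  have hc : 0 < c := by positivity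
  set K : α → ℝ := fun u => F u ^ (1 - t) * G u ^ t with hKdef
  have hKc : Continuous K :=
    (hFc.rpow_const fun u => Or.inr h1t.le).mul (hGc.rpow_const fun u => Or.inr ht0.le)
  set φ : α → ℝ := fun u =>
    (1 - t) * (F u / IF) + t * (G u / IG) - (F u / IF) ^ (1 - t) * (G u / IG) ^ t with hφdef
  have hφ0 : ∀ u, 0 ≤ φ u := fun u =>
    sub_nonneg.2 (amgm_le (div_nonneg (hF u).le hIF.le) (div_nonneg (hG u).le hIG.le)
      ht0.le ht1.le)
  have hφeq : ∀ u, φ u = ((1 - t) / IF) * F u + (t / IG) * G u - c⁻¹ * K u := by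
    intro u
    have h1 : (F u / IF) ^ (1 - t) = F u ^ (1 - t) / IF ^ (1 - t) :=
      Real.div_rpow (hF u).le hIF.le _
    have h2 : (G u / IG) ^ t = G u ^ t / IG ^ t := Real.div_rpow (hG u).le hIG.le _
    simp only [hφdef, h1, h2, hKdef]
    have hIFt : (0:ℝ) < IF ^ (1 - t) := Real.rpow_pos_of_pos hIF _
    have hIGt : (0:ℝ) < IG ^ t := Real.rpow_pos_of_pos hIG _
    field_simp
    try ring
  have hφc : Continuous φ := by
    refine (((continuous_const.mul (hFc.div_const IF)).add
      (continuous_const.mul (hGc.div_const IG))).sub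
      (Continuous.mul ?_ ?_))
    · exact (hFc.div_const IF).rpow_const fun u => Or.inr h1t.le
    · exact (hGc.div_const IG).rpow_const fun u => Or.inr ht0.le
  have hFi := cont_integrable μ hFc
  have hGi := cont_integrable μ hGc
  have hKi := cont_integrable μ hKc
  have hφint : ∫ u, φ u ∂μ = 1 - c⁻¹ * ∫ u, K u ∂μ := by
    have hadd : Integrable (fun a => (1 - t) / IF * F a + t / IG * G a) μ :=
      (hFi.const_mul _).add (hGi.const_mul _)
    have hint : ∫ u, φ u ∂μ =
        ((1 - t) / IF) * IF + (t / IG) * IG - c⁻¹ * ∫ u, K u ∂μ := by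
      rw [integral_congr_ae (Filter.Eventually.of_forall hφeq),
        integral_sub hadd (hKi.const_mul _),
        integral_add (hFi.const_mul _) (hGi.const_mul _),
        integral_const_mul, integral_const_mul, integral_const_mul]
    rw [hint]
    field_simp
    ring
  have hle : ∫ u, K u ∂μ ≤ c := by
    have h0 : 0 ≤ ∫ u, φ u ∂μ := integral_nonneg hφ0
    rw [hφint] at h0
    have h1 : c⁻¹ * ∫ u, K u ∂μ ≤ 1 := by linarith
    calc ∫ u, K u ∂μ = c * (c⁻¹ * ∫ u, K u ∂μ) := by field_simp
      _ ≤ c * 1 := mul_le_mul_of_nonneg_left h1 hc.le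
      _ = c := mul_one c
  refine ⟨hle, ?_⟩
  constructor
  · intro heq
    have hφ00 : ∫ u, φ u ∂μ = 0 := by
      rw [hφint, heq]
      field_simp
      ring
    have hφz : ∀ u, φ u = 0 := (integral_eq_zero_iff_of_nonneg μ hφc hφ0).1 hφ00
    refine ⟨IF / IG, div_pos hIF hIG, fun u => ?_⟩
    have hratio : F u / IF = G u / IG := by
      by_contra hne
      have h2 := amgm_lt (x := F u / IF) (y := G u / IG)
        (div_pos (hF u) hIF) (div_pos (hG u) hIG) hne ht0 ht1
      have h3 := hφz u
      simp only [hφdef] at h3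
      linarith
    rw [div_eq_div_iff hIF.ne' hIG.ne'] at hratio
    rw [div_mul_eq_mul_div, eq_div_iff hIG.ne']
    linarith
  · rintro ⟨c', hc', hFG⟩
    have hIFG : IF = c' * IG := by
      rw [hIFdef, hIGdef, ← integral_const_mul]
      exact integral_congr_ae (Filter.Eventually.of_forall fun u => by rw [hFG u])
    have hKG : ∀ u, K u = c' ^ (1 - t) * G u := by
      intro u
      simp only [hKdef, hFG u]
      rw [Real.mul_rpow hc'.le (hG u).le, mul_assoc, ← Real.rpow_add (hG u)]
      norm_num
    rw [integral_congr_ae (Filter.Eventually.of_forall hKG), integral_const_mul]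
    show c' ^ (1 - t) * IG = c
    rw [hcdef, hIFG, Real.mul_rpow hc'.le hIG.le, mul_assoc, ← Real.rpow_add hIG]
    norm_num

end Core

namespace SphereAux

variable {m : ℕ}

local notation "E" => EuclideanSpace ℝ (Fin (m + 1))
local notation "F" => EuclideanSpace ℝ (Fin m)

lemma norm_sq_eq {ι : Type*} [Fintype ι] (x : EuclideanSpace ℝ ι) :
    ‖x‖ ^ 2 = ∑ i, (x i) ^ 2 := by
  rw [EuclideanSpace.norm_eq, Real.sq_sqrt (by positivity)]
  simp [Real.norm_eq_abs, sq_abs]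

lemma dist_sq_eq {ι : Type*} [Fintype ι] (x y : EuclideanSpace ℝ ι) :
    dist x y ^ 2 = ∑ i, (x i - y i) ^ 2 := by
  rw [EuclideanSpace.dist_eq, Real.sq_sqrt (by positivity)]
  simp [Real.dist_eq, sq_abs]

/-- Projection forgetting the last coordinate. -/
def projE (x : E) : F := WithLp.toLp 2 (fun j : Fin m => x j.castSucc)

/-- Lift into the upper hemisphere. -/
noncomputable def liftF (y : F) : E :=
  WithLp.toLp 2 (Fin.snoc (fun j => y j) (Real.sqrt (1 - ‖y‖ ^ 2)) : Fin (m + 1) → ℝ)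

@[simp] lemma liftF_castSucc (y : F) (j : Fin m) : liftF y j.castSucc = y j := by
  simp [liftF]

@[simp] lemma liftF_last (y : F) : liftF y (Fin.last m) = Real.sqrt (1 - ‖y‖ ^ 2) := by
  simp [liftF]

@[simp] lemma proj_liftF (y : F) : projE (liftF y) = y := by
  ext j
  simp [projE]

lemma norm_proj_sq (x : E) : ‖projE x‖ ^ 2 = ‖x‖ ^ 2 - (x (Fin.last m)) ^ 2 := by
  rw [norm_sq_eq, norm_sq_eq, Fin.sum_univ_castSucc]
  simp [projE]

lemma norm_liftF (y : F) (hy : ‖y‖ ≤ 1) : ‖liftF y‖ = 1 := by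
  have hy0 : (0:ℝ) ≤ 1 - ‖y‖ ^ 2 := by nlinarith [norm_nonneg y]
  have h : ‖liftF y‖ ^ 2 = 1 := by
    rw [norm_sq_eq, Fin.sum_univ_castSucc]
    simp only [liftF_castSucc, liftF_last]
    rw [Real.sq_sqrt hy0, ← norm_sq_eq]
    ring
  nlinarith [norm_nonneg (liftF y)]

lemma le_of_sq_le_sq {a b : ℝ} (h : a ^ 2 ≤ b ^ 2) (hb : 0 ≤ b) : a ≤ b := by
  calc a ≤ |a| := le_abs_self a
    _ = Real.sqrt (a ^ 2) := (Real.sqrt_sq_eq_abs a).symm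
    _ ≤ Real.sqrt (b ^ 2) := Real.sqrt_le_sqrt h
    _ = b := Real.sqrt_sq hb

lemma liftF_proj (x : E) (hx : ‖x‖ = 1) (hpos : 0 ≤ x (Fin.last m)) : liftF (projE x) = x := by
  ext i
  induction i using Fin.lastCases with
  | last =>
    rw [liftF_last, norm_proj_sq, hx]
    rw [show 1 - ((1:ℝ) ^ 2 - (x (Fin.last m)) ^ 2) = (x (Fin.last m)) ^ 2 by ring,
      Real.sqrt_sq hpos]
  | cast j => simp [projE]

lemma proj_lipschitz : LipschitzWith 1 (projE (m := m)) := by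
  refine LipschitzWith.of_dist_le_mul fun x y => ?_
  rw [NNReal.coe_one, one_mul]
  have h2 : dist (projE x) (projE y) ^ 2 ≤ dist x y ^ 2 := by
    rw [dist_sq_eq, dist_sq_eq, Fin.sum_univ_castSucc]
    simp only [projE, PiLp.toLp_apply]
    exact le_add_of_nonneg_right (by positivity)
  exact le_of_sq_le_sq h2 dist_nonneg

set_option maxHeartbeats 1000000 in
lemma liftF_lipschitzOn : LipschitzOnWith 2 (liftF (m := m)) (closedBall (0 : F) (1/2)) := by
  refine LipschitzOnWith.of_dist_le_mul fun y hy z hz => ?_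
  rw [mem_closedBall, dist_zero_right] at hy hz
  set sy := Real.sqrt (1 - ‖y‖ ^ 2) with hsy
  set sz := Real.sqrt (1 - ‖z‖ ^ 2) with hsz
  have hy2 : sy ^ 2 = 1 - ‖y‖ ^ 2 := Real.sq_sqrt (by nlinarith [norm_nonneg y])
  have hz2 : sz ^ 2 = 1 - ‖z‖ ^ 2 := Real.sq_sqrt (by nlinarith [norm_nonneg z])
  have hsy2 : (1:ℝ)/2 ≤ sy := by
    rw [hsy]
    rw [show (1:ℝ)/2 = Real.sqrt (1/4) by
      rw [show (1:ℝ)/4 = (1/2)^2 by norm_num, Real.sqrt_sq (by norm_num)]]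
    exact Real.sqrt_le_sqrt (by nlinarith [norm_nonneg y])
  have hsz2 : (1:ℝ)/2 ≤ sz := by
    rw [hsz]
    rw [show (1:ℝ)/2 = Real.sqrt (1/4) by
      rw [show (1:ℝ)/4 = (1/2)^2 by norm_num, Real.sqrt_sq (by norm_num)]]
    exact Real.sqrt_le_sqrt (by nlinarith [norm_nonneg z])
  have hnn : |‖z‖ - ‖y‖| ≤ dist y z := by
    calc |‖z‖ - ‖y‖| ≤ ‖z - y‖ := abs_norm_sub_norm_le z y
      _ = dist z y := (dist_eq_norm z y).symm
      _ = dist y z := dist_comm z y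
  have key : (sy - sz) ^ 2 ≤ dist y z ^ 2 := by
    have heq : (sy - sz) * (sy + sz) = (‖z‖ - ‖y‖) * (‖z‖ + ‖y‖) := by nlinarith
    have habs2 : (‖z‖ - ‖y‖) ^ 2 ≤ dist y z ^ 2 := by
      nlinarith [abs_nonneg (‖z‖ - ‖y‖), sq_abs (‖z‖ - ‖y‖), dist_nonneg (x := y) (y := z)]
    have hq : (‖z‖ + ‖y‖) ^ 2 ≤ 1 := by nlinarith [norm_nonneg y, norm_nonneg z]
    have hs1 : 1 ≤ sy + sz := by linarith
    have hs2 : 1 ≤ (sy + sz) ^ 2 := by nlinarith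
    calc (sy - sz) ^ 2 = (sy - sz) ^ 2 * 1 := (mul_one _).symm
      _ ≤ (sy - sz) ^ 2 * (sy + sz) ^ 2 := mul_le_mul_of_nonneg_left hs2 (sq_nonneg _)
      _ = ((sy - sz) * (sy + sz)) ^ 2 := by ring
      _ = ((‖z‖ - ‖y‖) * (‖z‖ + ‖y‖)) ^ 2 := by rw [heq]
      _ = (‖z‖ - ‖y‖) ^ 2 * (‖z‖ + ‖y‖) ^ 2 := by ring
      _ ≤ dist y z ^ 2 * 1 := by
          apply mul_le_mul habs2 hq (sq_nonneg _) (sq_nonneg _)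
      _ = dist y z ^ 2 := mul_one _
  have hd2 : dist (liftF y) (liftF z) ^ 2 ≤ (2 * dist y z) ^ 2 := by
    rw [dist_sq_eq, Fin.sum_univ_castSucc]
    simp only [liftF_castSucc, liftF_last, ← hsy, ← hsz]
    have : ∑ j : Fin m, (y j - z j) ^ 2 = dist y z ^ 2 := (dist_sq_eq y z).symm
    rw [this]
    have hd := sq_nonneg (dist y z)
    nlinarith [key, hd]
  rw [show ((2:ℝ≥0) : ℝ) = 2 by norm_num]
  exact le_of_sq_le_sq hd2 (by positivity)

/-- The north pole. -/
noncomputable def pole : E := EuclideanSpace.single (Fin.last m) 1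

lemma norm_pole : ‖(pole : E)‖ = 1 := by
  rw [pole, EuclideanSpace.norm_single, norm_one]

lemma pole_castSucc (j : Fin m) : (pole : E) j.castSucc = 0 := by
  rw [pole, EuclideanSpace.single_apply, if_neg (Fin.castSucc_lt_last j).ne]

lemma pole_last : (pole : E) (Fin.last m) = 1 := by
  rw [pole, EuclideanSpace.single_apply, if_pos rfl]

lemma dist_pole_sq (x : E) (hx : ‖x‖ = 1) :
    dist x pole ^ 2 = 2 - 2 * x (Fin.last m) := by
  have hn : ∑ j : Fin m, (x j.castSucc) ^ 2 + (x (Fin.last m)) ^ 2 = 1 := by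
    rw [← Fin.sum_univ_castSucc (f := fun i => (x i) ^ 2), ← norm_sq_eq, hx, one_pow]
  rw [dist_sq_eq, Fin.sum_univ_castSucc]
  simp only [pole_castSucc, pole_last, sub_zero]
  nlinarith [hn]

lemma seven_eighths_le (x : E) (hx : ‖x‖ = 1) (hd : dist x pole ≤ 1/2) :
    7/8 ≤ x (Fin.last m) := by
  have h1 : dist x pole ^ 2 ≤ (1/2) ^ 2 := pow_le_pow_left₀ dist_nonneg hd 2
  rw [dist_pole_sq x hx] at h1
  linarith

lemma cap_subset_lift :
    (sphere (0:E) 1 : Set E) ∩ closedBall pole (1/2) ⊆ liftF '' (closedBall (0 : F) (1/2)) := by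
  rintro x ⟨hx, hd⟩
  rw [mem_sphere_zero_iff_norm] at hx
  rw [mem_closedBall] at hd
  have hlast : 7/8 ≤ x (Fin.last m) := seven_eighths_le x hx hd
  have hproj : ‖projE x‖ ≤ 1/2 := by
    have h2 : ‖projE x‖ ^ 2 ≤ (1/2) ^ 2 := by
      rw [norm_proj_sq, hx]
      nlinarith
    exact le_of_sq_le_sq h2 (by norm_num)
  exact ⟨projE x, by rwa [mem_closedBall, dist_zero_right], liftF_proj x hx (by linarith)⟩

lemma lt_of_sq_lt_sq {a b : ℝ} (h : a ^ 2 < b ^ 2) (hb : 0 ≤ b) : a < b := by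
  nlinarith [le_abs_self a, abs_nonneg a, sq_abs a]

lemma hd_pi_eq_volume : (μH[(m:ℝ)] : Measure (Fin m → ℝ)) = volume := by
  have := hausdorffMeasure_pi_real (ι := Fin m)
  rwa [Fintype.card_fin] at this

/-- Comparison of the Hausdorff measure on `F = ℓ²(Fin m)` with Lebesgue on `Fin m → ℝ`. -/
lemma hdF_closedBall_lt_top (r : ℝ) : μH[(m:ℝ)] (closedBall (0 : F) r) < ⊤ := by
  set e := WithLp.equiv 2 (Fin m → ℝ) with he
  have hm0 : (0:ℝ) ≤ (m:ℝ) := by positivity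
  set K := ((Fintype.card (Fin m) : ℝ≥0) ^ ((1:ℝ≥0∞) / 2).toReal) with hK
  have hA : AntilipschitzWith K e := PiLp.antilipschitzWith_ofLp 2 _
  have hLsymm : LipschitzWith K e.symm := hA.to_rightInverse e.right_inv
  have hid : e.symm '' (e '' closedBall (0 : F) r) = closedBall (0 : F) r := by
    rw [Set.image_image]; simp
  have hsub : e '' closedBall (0 : F) r ⊆ closedBall (0 : Fin m → ℝ) (|r|) := by
    rintro w ⟨v, hv, rfl⟩
    rw [mem_closedBall] at hv ⊢
    calc dist (e v) 0 = dist (e v) (e 0) := rfl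
      _ ≤ ((1:ℝ≥0):ℝ) * dist v 0 :=
          (PiLp.lipschitzWith_ofLp 2 (fun _ : Fin m => ℝ)).dist_le_mul v 0
      _ = dist v 0 := by norm_num
      _ ≤ |r| := hv.trans (le_abs_self r)
  calc μH[(m:ℝ)] (closedBall (0 : F) r)
      = μH[(m:ℝ)] (e.symm '' (e '' closedBall (0 : F) r)) := by rw [hid]
    _ ≤ (K : ℝ≥0∞) ^ (m:ℝ) * μH[(m:ℝ)] (e '' closedBall (0 : F) r) :=
        hLsymm.hausdorffMeasure_image_le hm0 _
    _ ≤ (K : ℝ≥0∞) ^ (m:ℝ) * μH[(m:ℝ)] (closedBall (0 : Fin m → ℝ) (|r|)) := by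
        gcongr
    _ < ⊤ := by
        rw [hd_pi_eq_volume, Real.volume_pi_closedBall _ (abs_nonneg r)]
        exact ENNReal.mul_lt_top (ENNReal.rpow_lt_top_of_nonneg hm0 ENNReal.coe_ne_top)
          ENNReal.ofReal_lt_top

lemma hdF_ball_pos {δ : ℝ} (hδ : 0 < δ) : 0 < μH[(m:ℝ)] (ball (0 : F) δ) := by
  set e := WithLp.equiv 2 (Fin m → ℝ) with he
  have hm0 : (0:ℝ) ≤ (m:ℝ) := by positivity
  set K := ((Fintype.card (Fin m) : ℝ≥0) ^ ((1:ℝ≥0∞) / 2).toReal) with hK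
  have hA : AntilipschitzWith K e := PiLp.antilipschitzWith_ofLp 2 _
  have hLsymm : LipschitzWith K e.symm := hA.to_rightInverse e.right_inv
  set δ' : ℝ := δ / ((K:ℝ) + 1) with hδ'
  have hK0 : (0:ℝ) ≤ (K:ℝ) := K.coe_nonneg
  have hδ'pos : 0 < δ' := by positivity
  have heq : ((K:ℝ) + 1) * δ' = δ := by
    rw [hδ']
    field_simp
  have hsub : ball (0 : Fin m → ℝ) δ' ⊆ e '' ball (0 : F) δ := by
    intro w hw
    rw [mem_ball] at hw
    refine ⟨e.symm w, ?_, e.apply_symm_apply w⟩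
    rw [mem_ball]
    calc dist (e.symm w) 0 = dist (e.symm w) (e.symm 0) := rfl
      _ ≤ K * dist w 0 := hLsymm.dist_le_mul w 0
      _ ≤ K * δ' := mul_le_mul_of_nonneg_left hw.le hK0
      _ < δ := by linarith
  have h1 : μH[(m:ℝ)] (e '' ball (0 : F) δ) ≤ (1:ℝ≥0) ^ (m:ℝ) * μH[(m:ℝ)] (ball (0 : F) δ) :=
    (PiLp.lipschitzWith_ofLp 2 (fun _ : Fin m => ℝ)).hausdorffMeasure_image_le hm0 _
  calc (0:ℝ≥0∞) < volume (ball (0 : Fin m → ℝ) δ') := by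
        rw [Real.volume_pi_ball _ hδ'pos]
        exact ENNReal.ofReal_pos.2 (by positivity)
    _ = μH[(m:ℝ)] (ball (0 : Fin m → ℝ) δ') := by rw [hd_pi_eq_volume]
    _ ≤ μH[(m:ℝ)] (e '' ball (0 : F) δ) := measure_mono hsub
    _ ≤ (1:ℝ≥0) ^ (m:ℝ) * μH[(m:ℝ)] (ball (0 : F) δ) := h1
    _ = μH[(m:ℝ)] (ball (0 : F) δ) := by simp

lemma exists_rot (x : E) (hx : ‖x‖ = 1) : ∃ g : E ≃ₗᵢ[ℝ] E, g pole = x :=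
  ⟨Submodule.reflection (ℝ ∙ ((pole : E) - x))ᗮ, Submodule.reflection_sub (by rw [norm_pole, hx])⟩

lemma cap_ball_eq (x : E) (hx : ‖x‖ = 1) (r : ℝ) :
    μH[(m:ℝ)] ((sphere (0:E) 1 : Set E) ∩ ball x r) =
      μH[(m:ℝ)] ((sphere (0:E) 1 : Set E) ∩ ball pole r) := by
  obtain ⟨g, hg⟩ := exists_rot x hx
  have him : g.toIsometryEquiv '' ((sphere (0:E) 1 : Set E) ∩ ball pole r) =
      (sphere (0:E) 1 : Set E) ∩ ball x r := by
    rw [Set.image_inter g.toIsometryEquiv.injective,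
      g.toIsometryEquiv.image_ball, g.toIsometryEquiv.image_sphere]
    have h0 : g.toIsometryEquiv (0:E) = 0 := by
      simp [LinearIsometryEquiv.coe_toIsometryEquiv]
    have hp : g.toIsometryEquiv pole = x := by
      simpa [LinearIsometryEquiv.coe_toIsometryEquiv] using hg
    rw [h0, hp]
  rw [← him, IsometryEquiv.hausdorffMeasure_image]

lemma cap_closedBall_eq (x : E) (hx : ‖x‖ = 1) (r : ℝ) :
    μH[(m:ℝ)] ((sphere (0:E) 1 : Set E) ∩ closedBall x r) =
      μH[(m:ℝ)] ((sphere (0:E) 1 : Set E) ∩ closedBall pole r) := by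
  obtain ⟨g, hg⟩ := exists_rot x hx
  have him : g.toIsometryEquiv '' ((sphere (0:E) 1 : Set E) ∩ closedBall pole r) =
      (sphere (0:E) 1 : Set E) ∩ closedBall x r := by
    rw [Set.image_inter g.toIsometryEquiv.injective,
      g.toIsometryEquiv.image_closedBall, g.toIsometryEquiv.image_sphere]
    have h0 : g.toIsometryEquiv (0:E) = 0 := by
      simp [LinearIsometryEquiv.coe_toIsometryEquiv]
    have hp : g.toIsometryEquiv pole = x := by
      simpa [LinearIsometryEquiv.coe_toIsometryEquiv] using hg
    rw [h0, hp]
  rw [← him, IsometryEquiv.hausdorffMeasure_image]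

lemma cap_pole_lt_top : μH[(m:ℝ)] ((sphere (0:E) 1 : Set E) ∩ closedBall pole (1/2)) < ⊤ := by
  have hm0 : (0:ℝ) ≤ (m:ℝ) := by positivity
  calc μH[(m:ℝ)] ((sphere (0:E) 1 : Set E) ∩ closedBall pole (1/2))
      ≤ μH[(m:ℝ)] (liftF '' (closedBall (0 : F) (1/2))) := measure_mono cap_subset_lift
    _ ≤ (2:ℝ≥0) ^ (m:ℝ) * μH[(m:ℝ)] (closedBall (0 : F) (1/2)) :=
        liftF_lipschitzOn.hausdorffMeasure_image_le hm0
    _ < ⊤ := ENNReal.mul_lt_top (ENNReal.rpow_lt_top_of_nonneg hm0 ENNReal.coe_ne_top)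
        (hdF_closedBall_lt_top _)

lemma sphere_lt_top : μH[(m:ℝ)] (sphere (0:E) 1 : Set E) < ⊤ := by
  have hcov : (sphere (0:E) 1 : Set E) ⊆ ⋃ x ∈ (sphere (0:E) 1 : Set E), ball x (1/2) :=
    fun x hx => Set.mem_biUnion hx (mem_ball_self (by norm_num))
  obtain ⟨t, hts, htfin, hcov'⟩ := (isCompact_sphere (0:E) 1).elim_finite_subcover_image
    (fun x _ => isOpen_ball) hcov
  calc μH[(m:ℝ)] (sphere (0:E) 1 : Set E)
      ≤ μH[(m:ℝ)] (⋃ x ∈ htfin.toFinset, (sphere (0:E) 1 : Set E) ∩ ball x (1/2)) := by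
        apply measure_mono
        intro z hz
        obtain ⟨x, hxt, hzx⟩ := Set.mem_iUnion₂.1 (hcov' hz)
        exact Set.mem_iUnion₂.2 ⟨x, htfin.mem_toFinset.2 hxt, hz, hzx⟩
    _ ≤ ∑ x ∈ htfin.toFinset, μH[(m:ℝ)] ((sphere (0:E) 1 : Set E) ∩ ball x (1/2)) :=
        measure_biUnion_finset_le _ _
    _ < ⊤ := by
        refine ENNReal.sum_lt_top.2 fun x hxt => ?_
        have hx : ‖x‖ = 1 :=
          mem_sphere_zero_iff_norm.1 (hts (htfin.mem_toFinset.1 hxt))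
        rw [cap_ball_eq x hx]
        exact lt_of_le_of_lt
          (measure_mono (Set.inter_subset_inter_right _ ball_subset_closedBall))
          cap_pole_lt_top

lemma cap_pos (x : E) (hx : ‖x‖ = 1) {r : ℝ} (hr : 0 < r) :
    0 < μH[(m:ℝ)] ((sphere (0:E) 1 : Set E) ∩ ball x r) := by
  have hm0 : (0:ℝ) ≤ (m:ℝ) := by positivity
  rw [cap_ball_eq x hx]
  set ρ : ℝ := min r (1/2) with hρ
  have hρ0 : 0 < ρ := lt_min hr (by norm_num)
  have hρ1 : ρ ≤ 1/2 := min_le_right _ _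
  set δ : ℝ := ρ/2 with hδ
  have hδ0 : 0 < δ := by positivity
  have hsub : ball (0 : F) δ ⊆ projE '' ((sphere (0:E) 1 : Set E) ∩ ball pole ρ) := by
    intro y hy
    rw [mem_ball, dist_zero_right] at hy
    have hy1 : ‖y‖ ≤ 1 := by linarith
    have hlift : liftF y ∈ (sphere (0:E) 1 : Set E) :=
      mem_sphere_zero_iff_norm.2 (norm_liftF y hy1)
    have hdist : dist (liftF y) pole < ρ := by
      have hsq : dist (liftF y) pole ^ 2 = 2 - 2 * Real.sqrt (1 - ‖y‖ ^ 2) := by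
        rw [dist_pole_sq _ (norm_liftF y hy1), liftF_last]
      set s := Real.sqrt (1 - ‖y‖ ^ 2) with hs
      have hs2 : s ^ 2 = 1 - ‖y‖ ^ 2 := Real.sq_sqrt (by nlinarith [norm_nonneg y])
      have hs1 : s ≤ 1 := by
        have h := Real.sqrt_le_sqrt (show 1 - ‖y‖ ^ 2 ≤ 1 by nlinarith [norm_nonneg y])
        rwa [Real.sqrt_one] at h
      have hs0 : 0 ≤ s := Real.sqrt_nonneg _
      have hge : 1 - ‖y‖ ^ 2 ≤ s := by nlinarith
      have hlt : dist (liftF y) pole ^ 2 < ρ ^ 2 := by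
        rw [hsq]
        nlinarith [norm_nonneg y, hy]
      exact lt_of_sq_lt_sq hlt hρ0.le
    exact ⟨liftF y, ⟨hlift, mem_ball.2 hdist⟩, proj_liftF y⟩
  have h1 : μH[(m:ℝ)] (projE '' ((sphere (0:E) 1 : Set E) ∩ ball pole ρ)) ≤
      (1:ℝ≥0) ^ (m:ℝ) * μH[(m:ℝ)] ((sphere (0:E) 1 : Set E) ∩ ball pole ρ) :=
    proj_lipschitz.hausdorffMeasure_image_le hm0 _
  calc (0:ℝ≥0∞) < μH[(m:ℝ)] (ball (0 : F) δ) := hdF_ball_pos hδ0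
    _ ≤ μH[(m:ℝ)] (projE '' ((sphere (0:E) 1 : Set E) ∩ ball pole ρ)) := measure_mono hsub
    _ ≤ (1:ℝ≥0) ^ (m:ℝ) * μH[(m:ℝ)] ((sphere (0:E) 1 : Set E) ∩ ball pole ρ) := h1
    _ = μH[(m:ℝ)] ((sphere (0:E) 1 : Set E) ∩ ball pole ρ) := by simp
    _ ≤ μH[(m:ℝ)] ((sphere (0:E) 1 : Set E) ∩ ball pole r) := by
        apply measure_mono
        exact Set.inter_subset_inter_right _ (ball_subset_ball (min_le_left _ _))

lemma pole_mem_sphere : (pole : E) ∈ (sphere (0:E) 1 : Set E) :=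
  mem_sphere_zero_iff_norm.2 norm_pole

lemma subtype_meas (A : Set (sphere (0:E) 1)) :
    μH[(m:ℝ)] A = μH[(m:ℝ)] (Subtype.val '' A : Set E) :=
  (isometry_subtype_coe.hausdorffMeasure_image (Or.inl (by positivity)) A).symm

lemma sphere_isFiniteMeasure : IsFiniteMeasure (μH[(m:ℝ)] : Measure (sphere (0:E) 1)) := by
  constructor
  rw [subtype_meas, Set.image_univ, Subtype.range_coe]
  exact sphere_lt_top

lemma sphere_isOpenPos : (μH[(m:ℝ)] : Measure (sphere (0:E) 1)).IsOpenPosMeasure := by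
  refine ⟨fun U hU hne => ?_⟩
  obtain ⟨u, hu⟩ := hne
  obtain ⟨r, hr0, hball⟩ := Metric.isOpen_iff.1 hU u hu
  have hsub : (sphere (0:E) 1 : Set E) ∩ ball (↑u) r ⊆ Subtype.val '' U := by
    rintro z ⟨hz1, hz2⟩
    exact ⟨⟨z, hz1⟩, hball (by rwa [mem_ball, Subtype.dist_eq]), rfl⟩
  have hpos := cap_pos (↑u : E) (mem_sphere_zero_iff_norm.1 u.2) hr0
  have hlt : 0 < μH[(m:ℝ)] U := by
    rw [subtype_meas]
    exact lt_of_lt_of_le hpos (measure_mono hsub)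
  exact hlt.ne'

end SphereAux
open SphereAux in
/-- The Minkowski inequality for the mixed `p`-harmonic quermassintegral:
`W̃_{-p,i}(K,L)^{n-i} ≥ W̃ᵢ(K)^{n-i+p} W̃ᵢ(L)^{-p}`, with equality iff `K,L` are dilates. -/
theorem mixed_p_harmonic_quermassintegral_minkowski
    (n i : ℕ) (hi : i < n) (p : ℝ) (hp : 1 ≤ p)
    (ρK ρL : sphere (0 : EuclideanSpace ℝ (Fin n)) 1 → ℝ)
    (hKc : Continuous ρK) (hLc : Continuous ρL)
    (hKpos : ∀ u, 0 < ρK u) (hLpos : ∀ u, 0 < ρL u)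
    (Wp WK WL : ℝ)
    (hWp : Wp = (1 / n) * ∫ u, (ρK u) ^ ((n : ℝ) - i + p) * (ρL u) ^ (-p) ∂(sphereσ n))
    (hWK : WK = (1 / n) * ∫ u, (ρK u) ^ (n - i) ∂(sphereσ n))
    (hWL : WL = (1 / n) * ∫ u, (ρL u) ^ (n - i) ∂(sphereσ n)) :
    Wp ^ (n - i) ≥ WK ^ ((n : ℝ) - i + p) * WL ^ (-p) ∧
      (Wp ^ (n - i) = WK ^ ((n : ℝ) - i + p) * WL ^ (-p) ↔
        ∃ c : ℝ, 0 < c ∧ ∀ u, ρK u = c * ρL u) := by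
  obtain ⟨m, rfl⟩ : ∃ m, n = m + 1 := ⟨n - 1, by omega⟩
  have hμ : sphereσ (m + 1) =
      (μH[((m:ℕ):ℝ)] : Measure (sphere (0 : EuclideanSpace ℝ (Fin (m+1))) 1)) := by
    rw [sphereσ]
    congr 1
    push_cast
    ring
  haveI hFin : IsFiniteMeasure (sphereσ (m + 1)) := by
    rw [hμ]; exact sphere_isFiniteMeasure
  haveI hOpen : (sphereσ (m + 1)).IsOpenPosMeasure := by
    rw [hμ]; exact sphere_isOpenPos
  haveI hNE : Nonempty (sphere (0 : EuclideanSpace ℝ (Fin (m+1))) 1) :=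
    ⟨⟨pole, pole_mem_sphere⟩⟩
  set M : ℕ := m + 1 - i with hMdef
  have hM1 : 1 ≤ M := by omega
  have hM1' : (1:ℝ) ≤ (M:ℝ) := by exact_mod_cast hM1
  have hcast : ((m+1:ℕ):ℝ) - (i:ℝ) = (M:ℝ) := by
    rw [hMdef, Nat.cast_sub (by omega : i ≤ m + 1)]
  have hp0 : (0:ℝ) < p := lt_of_lt_of_le one_pos hp
  set s : ℝ := (M:ℝ) + p with hsdef
  have hs0 : (0:ℝ) < s := by rw [hsdef]; linarith
  have hs' : s ≠ 0 := hs0.ne'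
  set t : ℝ := p / s with htdef
  have ht0 : 0 < t := div_pos hp0 hs0
  have ht1 : t < 1 := by
    rw [htdef, div_lt_one hs0, hsdef]
    linarith
  have e1 : s * (1 - t) = (M:ℝ) := by
    rw [htdef, hsdef]
    field_simp
    ring
  have e3 : s * t = p := by
    rw [htdef]
    field_simp
  have e2 : (-p) * (1 - t) + (M:ℝ) * t = 0 := by
    rw [htdef, hsdef]
    field_simp
    ring
  have hexp : ((m+1:ℕ):ℝ) - (i:ℝ) + p = s := by rw [hsdef, ← hcast]
  set F : sphere (0 : EuclideanSpace ℝ (Fin (m+1))) 1 → ℝ :=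
    fun u => ρK u ^ s * ρL u ^ (-p) with hFdef
  set G : sphere (0 : EuclideanSpace ℝ (Fin (m+1))) 1 → ℝ :=
    fun u => ρL u ^ (M:ℝ) with hGdef
  have hFc : Continuous F := by
    rw [hFdef]
    exact (hKc.rpow_const fun u => Or.inl (hKpos u).ne').mul
      (hLc.rpow_const fun u => Or.inl (hLpos u).ne')
  have hGc : Continuous G := by
    rw [hGdef]
    exact hLc.rpow_const fun u => Or.inl (hLpos u).ne'
  have hFpos : ∀ u, 0 < F u := fun u =>
    mul_pos (Real.rpow_pos_of_pos (hKpos u) _) (Real.rpow_pos_of_pos (hLpos u) _)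
  have hGpos : ∀ u, 0 < G u := fun u => Real.rpow_pos_of_pos (hLpos u) _
  have hKey : ∀ u, F u ^ (1 - t) * G u ^ t = ρK u ^ (M:ℝ) := by
    intro u
    simp only [hFdef, hGdef]
    rw [Real.mul_rpow (Real.rpow_pos_of_pos (hKpos u) _).le
      (Real.rpow_pos_of_pos (hLpos u) _).le,
      ← Real.rpow_mul (hKpos u).le, ← Real.rpow_mul (hLpos u).le,
      ← Real.rpow_mul (hLpos u).le, mul_assoc, ← Real.rpow_add (hLpos u), e1, e2,
      Real.rpow_zero, mul_one]
  obtain ⟨hle, hiff⟩ :=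
    holder_core (sphereσ (m+1)) F G hFc hGc hFpos hGpos t ht0 ht1
  set J := ∫ u, F u ∂(sphereσ (m+1)) with hJdef
  set IL := ∫ u, G u ∂(sphereσ (m+1)) with hILdef
  set IK := ∫ u, ρK u ^ (M:ℝ) ∂(sphereσ (m+1)) with hIKdef
  have hcongr : ∫ u, F u ^ (1 - t) * G u ^ t ∂(sphereσ (m+1)) = IK := by
    rw [hIKdef]
    exact integral_congr_ae (Filter.Eventually.of_forall hKey)
  rw [hcongr] at hle hiff
  have hJ0 : 0 < J := integral_pos_of_pos _ hFc hFpos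
  have hIL0 : 0 < IL := integral_pos_of_pos _ hGc hGpos
  have hIK0 : 0 < IK := integral_pos_of_pos _
    (hKc.rpow_const fun u => Or.inl (hKpos u).ne')
    (fun u => Real.rpow_pos_of_pos (hKpos u) _)
  set N : ℝ := ((m+1:ℕ):ℝ) with hNdef
  have hN0 : 0 < N := by rw [hNdef]; positivity
  have hWp' : Wp = J / N := by
    rw [hWp, hexp, hJdef]
    have : ∫ u, ρK u ^ s * ρL u ^ (-p) ∂(sphereσ (m+1)) = ∫ u, F u ∂(sphereσ (m+1)) := by
      apply integral_congr_ae
      filter_upwards with u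
      simp only [hFdef]
    rw [this]
    ring
  have hWK' : WK = IK / N := by
    rw [hWK, hIKdef]
    have : ∫ u, ρK u ^ M ∂(sphereσ (m+1)) = ∫ u, ρK u ^ (M:ℝ) ∂(sphereσ (m+1)) :=
      integral_congr_ae (Filter.Eventually.of_forall fun u =>
        (Real.rpow_natCast (ρK u) M).symm)
    rw [this]
    ring
  have hWL' : WL = IL / N := by
    rw [hWL, hILdef]
    have : ∫ u, ρL u ^ M ∂(sphereσ (m+1)) = ∫ u, G u ∂(sphereσ (m+1)) := by
      apply integral_congr_ae
      filter_upwards with u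
      simp only [hGdef]
      exact (Real.rpow_natCast (ρL u) M).symm
    rw [this]
    ring
  have hWp0 : 0 < Wp := by rw [hWp']; exact div_pos hJ0 hN0
  have hWK0 : 0 < WK := by rw [hWK']; exact div_pos hIK0 hN0
  have hWL0 : 0 < WL := by rw [hWL']; exact div_pos hIL0 hN0
  rw [hexp]
  have hRHS0 : 0 < WK ^ s * WL ^ (-p) :=
    mul_pos (Real.rpow_pos_of_pos hWK0 _) (Real.rpow_pos_of_pos hWL0 _)
  have hLHS0 : 0 < Wp ^ M := pow_pos hWp0 M
  -- log forms
  have hlogRHS : Real.log (WK ^ s * WL ^ (-p)) =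
      s * (Real.log IK - Real.log N) + (-p) * (Real.log IL - Real.log N) := by
    rw [Real.log_mul (Real.rpow_pos_of_pos hWK0 _).ne' (Real.rpow_pos_of_pos hWL0 _).ne',
      Real.log_rpow hWK0, Real.log_rpow hWL0, hWK', hWL',
      Real.log_div hIK0.ne' hN0.ne', Real.log_div hIL0.ne' hN0.ne']
  have hlogLHS : Real.log (Wp ^ M) = (M:ℝ) * (Real.log J - Real.log N) := by
    rw [Real.log_pow, hWp', Real.log_div hJ0.ne' hN0.ne']
  have hiff_log : (IK = J ^ (1 - t) * IL ^ t) ↔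
      (Real.log IK = (1 - t) * Real.log J + t * Real.log IL) := by
    constructor
    · intro h
      rw [h, Real.log_mul (Real.rpow_pos_of_pos hJ0 _).ne'
        (Real.rpow_pos_of_pos hIL0 _).ne', Real.log_rpow hJ0, Real.log_rpow hIL0]
    · intro h
      have h1 : Real.log IK = Real.log (J ^ (1 - t) * IL ^ t) := by
        rw [Real.log_mul (Real.rpow_pos_of_pos hJ0 _).ne'
          (Real.rpow_pos_of_pos hIL0 _).ne', Real.log_rpow hJ0, Real.log_rpow hIL0, h]
      calc IK = Real.exp (Real.log IK) := (Real.exp_log hIK0).symm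
        _ = Real.exp (Real.log (J ^ (1 - t) * IL ^ t)) := by rw [h1]
        _ = J ^ (1 - t) * IL ^ t := Real.exp_log
            (mul_pos (Real.rpow_pos_of_pos hJ0 _) (Real.rpow_pos_of_pos hIL0 _))
  have hlogK : Real.log IK ≤ (1 - t) * Real.log J + t * Real.log IL := by
    have h := (Real.log_le_log_iff hIK0 (mul_pos (Real.rpow_pos_of_pos hJ0 _)
      (Real.rpow_pos_of_pos hIL0 _))).2 hle
    rwa [Real.log_mul (Real.rpow_pos_of_pos hJ0 _).ne' (Real.rpow_pos_of_pos hIL0 _).ne',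
      Real.log_rpow hJ0, Real.log_rpow hIL0] at h
  have hmain_le : WK ^ s * WL ^ (-p) ≤ Wp ^ M := by
    rw [← Real.log_le_log_iff hRHS0 hLHS0, hlogRHS, hlogLHS]
    have h5 : s * Real.log IK ≤ (M:ℝ) * Real.log J + p * Real.log IL := by
      calc s * Real.log IK ≤ s * ((1 - t) * Real.log J + t * Real.log IL) :=
            mul_le_mul_of_nonneg_left hlogK hs0.le
        _ = (s * (1 - t)) * Real.log J + (s * t) * Real.log IL := by ring
        _ = (M:ℝ) * Real.log J + p * Real.log IL := by rw [e1, e3]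
    rw [hsdef] at h5 ⊢
    linarith [h5]
  have heq_iff : (Wp ^ M = WK ^ s * WL ^ (-p)) ↔ IK = J ^ (1 - t) * IL ^ t := by
    rw [hiff_log]
    constructor
    · intro h
      have hlog : Real.log (Wp ^ M) = Real.log (WK ^ s * WL ^ (-p)) := by rw [h]
      rw [hlogRHS, hlogLHS] at hlog
      have hA : s * Real.log IK = (M:ℝ) * Real.log J + p * Real.log IL := by
        rw [hsdef] at hlog ⊢
        linarith [hlog]
      have hB : s * Real.log IK = s * ((1 - t) * Real.log J + t * Real.log IL) := by
        rw [show s * ((1 - t) * Real.log J + t * Real.log IL)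
            = (s * (1 - t)) * Real.log J + (s * t) * Real.log IL by ring, e1, e3]
        exact hA
      exact mul_left_cancel₀ hs' hB
    · intro h
      have hB : s * Real.log IK = (M:ℝ) * Real.log J + p * Real.log IL := by
        calc s * Real.log IK = s * ((1 - t) * Real.log J + t * Real.log IL) := by rw [h]
          _ = (s * (1 - t)) * Real.log J + (s * t) * Real.log IL := by ring
          _ = (M:ℝ) * Real.log J + p * Real.log IL := by rw [e1, e3]
      have hlog : Real.log (Wp ^ M) = Real.log (WK ^ s * WL ^ (-p)) := by
        rw [hlogRHS, hlogLHS, hsdef]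
        rw [hsdef] at hB
        linarith [hB]
      calc Wp ^ M = Real.exp (Real.log (Wp ^ M)) := (Real.exp_log hLHS0).symm
        _ = Real.exp (Real.log (WK ^ s * WL ^ (-p))) := by rw [hlog]
        _ = WK ^ s * WL ^ (-p) := Real.exp_log hRHS0
  have hdil : (∃ c : ℝ, 0 < c ∧ ∀ u, F u = c * G u) ↔
      (∃ c : ℝ, 0 < c ∧ ∀ u, ρK u = c * ρL u) := by
    constructor
    · rintro ⟨c', hc', hFG⟩
      have hKL : ∀ u, ρK u ^ s = c' * ρL u ^ s := by
        intro u
        have h := hFG u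
        simp only [hFdef, hGdef] at h
        have hLp : ρL u ^ (-p) * ρL u ^ p = 1 := by
          rw [← Real.rpow_add (hLpos u)]
          norm_num
        calc ρK u ^ s = ρK u ^ s * (ρL u ^ (-p) * ρL u ^ p) := by rw [hLp, mul_one]
          _ = ρK u ^ s * ρL u ^ (-p) * ρL u ^ p := by ring
          _ = c' * ρL u ^ (M:ℝ) * ρL u ^ p := by rw [h]
          _ = c' * (ρL u ^ (M:ℝ) * ρL u ^ p) := by ring
          _ = c' * ρL u ^ s := by rw [← Real.rpow_add (hLpos u), ← hsdef]
      refine ⟨c' ^ s⁻¹, Real.rpow_pos_of_pos hc' _, fun u => ?_⟩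
      have h2 := congrArg (fun x : ℝ => x ^ s⁻¹) (hKL u)
      rwa [Real.mul_rpow hc'.le (Real.rpow_pos_of_pos (hLpos u) s).le,
        ← Real.rpow_mul (hKpos u).le, ← Real.rpow_mul (hLpos u).le,
        mul_inv_cancel₀ hs', Real.rpow_one, Real.rpow_one] at h2
    · rintro ⟨c, hc, hKL⟩
      refine ⟨c ^ s, Real.rpow_pos_of_pos hc _, fun u => ?_⟩
      simp only [hFdef, hGdef]
      rw [hKL u, Real.mul_rpow hc.le (hLpos u).le, mul_assoc, ← Real.rpow_add (hLpos u),
        show s + -p = (M:ℝ) by rw [hsdef]; ring]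
  exact ⟨hmain_le, by rw [heq_iff, hiff, hdil]⟩
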